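/- Let N ≥ 1 be an odd integer and q = exp(2πi/N). For all z ∈ ℂ with z ≠ 0 and z^{2N} ≠ 1, Σ_{k=0}^{N−1} A_k(z;N) = −N·((α+β+1)z^{2N} + (α−β)z^N)/(z^{2N} − 1), where A_k(z;N) = ((α+β+1)z² + ρ_k(α−β)z)/(q^k − z²) with ρ_k = q^{k/2} for k even and ρ_k = q^{(k−N)/2} for k odd. -/

import Mathlib

open Finset

/-- Monic OPUC associated to a sequence of (real) Verblunsky parameters. -/
noncomputable def Phi (c : ℕ → ℝ) : ℕ → ℂ → ℂ
  | 0, _ => 1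
  | n + 1, z => z * Phi c n z - (c n : ℂ) * z ^ n * Phi c n z⁻¹

/-- CMV Laurent polynomials: ψ_{2m} z = z^m Φ_{2m}(1/z), ψ_{2m+1} z = z^{-m} Φ_{2m+1}(z). -/
noncomputable def psi (c : ℕ → ℝ) (n : ℕ) (z : ℂ) : ℂ :=
  if Even n then z ^ (n / 2) * Phi c n z⁻¹
  else z ^ (-((n / 2 : ℕ) : ℤ)) * Phi c n z

/-- Verblunsky parameters of the Jacobi OPUC. -/
noncomputable def jacobiA (α β : ℝ) (n : ℕ) : ℝ :=
  -(α + 1 / 2 + (-1 : ℝ) ^ (n + 1) * (β + 1 / 2)) / (n + α + β + 2)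

/-- Sieved Verblunsky parameters: a_n(N) = a_{k-1} if n = N k - 1 (k ≥ 1), 0 otherwise. -/
noncomputable def sievedA (α β : ℝ) (N n : ℕ) : ℝ :=
  if N ∣ (n + 1) then jacobiA α β ((n + 1) / N - 1) else 0

/-- The primitive N-th root of unity q = exp(2πi/N). -/
noncomputable def qN (N : ℕ) : ℂ := Complex.exp (2 * Real.pi * Complex.I / N)

/-- The coefficients A_k(z;N) of the Dunkl-type operator L(N). -/
noncomputable def Acoef (α β : ℝ) (N k : ℕ) (z : ℂ) : ℂ :=
  if Even N then
    ((α : ℂ) + β + 1 + (-1 : ℂ) ^ k * ((α : ℂ) - β)) * z ^ 2 / (qN N ^ k - z ^ 2)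
  else
    (((α : ℂ) + β + 1) * z ^ 2 +
        (if Even k then qN N ^ ((k : ℤ) / 2) else qN N ^ (((k : ℤ) - (N : ℤ)) / 2)) *
          ((α : ℂ) - β) * z) /
      (qN N ^ k - z ^ 2)

/-- B(z) = N((α+β+1) z^{2N} + (α-β) z^N)/(z^{2N} - 1). -/
noncomputable def Bfun (α β : ℝ) (N : ℕ) (z : ℂ) : ℂ :=
  (N : ℂ) * (((α : ℂ) + β + 1) * z ^ (2 * N) + ((α : ℂ) - β) * z ^ N) / (z ^ (2 * N) - 1)

/-- The Dunkl-type operator L(N). -/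
noncomputable def Lop (α β : ℝ) (N : ℕ) (f : ℂ → ℂ) : ℂ → ℂ := fun z =>
  z * deriv f z + ∑ k ∈ Finset.range N, Acoef α β N k z * (f (qN N ^ k / z) - f z)

/-- A function ℂ∖{0} → ℂ is a Laurent polynomial. -/
def IsLaurentPoly (f : ℂ → ℂ) : Prop :=
  ∃ (m : ℕ) (p : Polynomial ℂ), ∀ z : ℂ, z ≠ 0 → f z = Polynomial.eval z p / z ^ m

/-- Sieved Jacobi polynomial of the first kind, as a function of z (x = z + 1/z). -/
noncomputable def sievP (α β : ℝ) (N n : ℕ) (z : ℂ) : ℂ :=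
  psi (sievedA α β N) (2 * n) z
    + (1 + (sievedA α β N (2 * n - 1) : ℂ)) * psi (sievedA α β N) (2 * n - 1) z

/-- χ_n(z) = (z - 1/z) Q_{n-1}(x(z)), with Q the sieved Jacobi polynomial of 2nd kind. -/
noncomputable def sievChi (α β : ℝ) (N n : ℕ) (z : ℂ) : ℂ :=
  -psi (sievedA α β N) (2 * n) z
    + (1 - (sievedA α β N (2 * n - 1) : ℂ)) * psi (sievedA α β N) (2 * n - 1) z

lemma sum_inv_root (N : ℕ) (hN : 1 ≤ N) (ζ z : ℂ) (hζ : IsPrimitiveRoot ζ N)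
    (hz : z ^ N ≠ 1) :
    ∑ k ∈ Finset.range N, (ζ ^ k - z)⁻¹ = (N : ℂ) * z ^ (N - 1) / (1 - z ^ N) := by
  have hzN : (1 : ℂ) - z ^ N ≠ 0 := sub_ne_zero.mpr fun h => hz h.symm
  have hζN : ζ ^ N = 1 := hζ.pow_eq_one
  have hterm : ∀ k ∈ Finset.range N,
      (ζ ^ k - z)⁻¹ = (∑ j ∈ Finset.range N, (ζ ^ k) ^ j * z ^ (N - 1 - j)) / (1 - z ^ N) := by
    intro k hk
    have hmul : (∑ j ∈ Finset.range N, (ζ ^ k) ^ j * z ^ (N - 1 - j)) * (ζ ^ k - z)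
        = 1 - z ^ N := by
      rw [geom_sum₂_mul, ← pow_mul, mul_comm k N, pow_mul, hζN, one_pow]
    have hne : ζ ^ k - z ≠ 0 := by
      intro h
      apply hz
      have hzeq : z = ζ ^ k := by rw [← sub_eq_zero]; rw [sub_eq_zero] at h ⊢; exact h.symm
      rw [hzeq, ← pow_mul, mul_comm k N, pow_mul, hζN, one_pow]
    rw [eq_div_iff hzN, ← hmul, mul_comm _ (ζ ^ k - z), ← mul_assoc,
      inv_mul_cancel₀ hne, one_mul]
  rw [Finset.sum_congr rfl hterm, ← Finset.sum_div]
  congr 1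
  have hswap : ∑ k ∈ range N, ∑ j ∈ range N, (ζ ^ k) ^ j * z ^ (N - 1 - j)
      = ∑ j ∈ range N, (∑ k ∈ range N, (ζ ^ j) ^ k) * z ^ (N - 1 - j) := by
    rw [Finset.sum_comm]
    refine Finset.sum_congr rfl fun j hj => ?_
    rw [Finset.sum_mul]
    refine Finset.sum_congr rfl fun k hk => ?_
    rw [← pow_mul, ← pow_mul, mul_comm k j, mul_comm]
  rw [hswap, Finset.sum_eq_single 0]
  · simp
  · intro j hj hj0
    have hne1 : ζ ^ j ≠ 1 :=
      hζ.pow_ne_one_of_pos_of_lt hj0 (Finset.mem_range.mp hj)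
    rw [geom_sum_eq hne1, ← pow_mul, mul_comm j N, pow_mul, hζN, one_pow, sub_self,
      zero_div, zero_mul]
  · intro h
    exact absurd (Finset.mem_range.mpr (by omega)) h

/-- for odd N ≥ 1, Σ_{k=0}^{N-1} A_k(z;N) = -B(z). -/
theorem stmt_8 (α β : ℝ) (N : ℕ) (hN : 1 ≤ N) (hNo : Odd N) (z : ℂ) (hz : z ≠ 0)
    (hz2 : z ^ (2 * N) ≠ 1) :
    ∑ k ∈ Finset.range N, Acoef α β N k z
      = -(N : ℂ) * (((α : ℂ) + β + 1) * z ^ (2 * N) + ((α : ℂ) - β) * z ^ N)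
          / (z ^ (2 * N) - 1) := by
  have hN0 : N ≠ 0 := by omega
  obtain ⟨s, hs⟩ := id hNo
  have hprim : IsPrimitiveRoot (qN N) N := Complex.isPrimitiveRoot_exp N hN0
  have hq0 : qN N ≠ 0 := Complex.exp_ne_zero _
  have hqN1 : qN N ^ N = 1 := hprim.pow_eq_one
  have hcop : Nat.Coprime (s + 1) N := by
    have h1 : Nat.gcd (s + 1) N ∣ 2 * (s + 1) - N :=
      Nat.dvd_sub ((Nat.gcd_dvd_left _ _).mul_left 2) (Nat.gcd_dvd_right _ _)
    have h2 : 2 * (s + 1) - N = 1 := by omega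
    rw [h2] at h1
    exact Nat.dvd_one.mp h1
  have hζprim : IsPrimitiveRoot (qN N ^ (s + 1)) N := hprim.pow_of_coprime (s + 1) hcop
  set ζ : ℂ := qN N ^ (s + 1) with hζdef
  have hζN1 : ζ ^ N = 1 := hζprim.pow_eq_one
  have hζ2 : ζ ^ 2 = qN N := by
    rw [hζdef, ← pow_mul]
    have h3 : (s + 1) * 2 = N + 1 := by omega
    rw [h3, pow_succ, hqN1, one_mul]
  have hzN1 : z ^ N ≠ 1 := fun h => hz2 (by rw [two_mul, pow_add, h, one_mul])
  have hzN2 : z ^ N ≠ -1 := fun h => hz2 (by rw [two_mul, pow_add, h]; ring)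
  have h1m : (1 : ℂ) - z ^ N ≠ 0 := sub_ne_zero.mpr fun h => hzN1 h.symm
  have h1p : (1 : ℂ) + z ^ N ≠ 0 := fun h => hzN2 (by linear_combination h)
  have hden : ∀ k : ℕ, ζ ^ k - z ≠ 0 ∧ ζ ^ k + z ≠ 0 := by
    intro k
    constructor
    · intro h
      apply hzN1
      have h4 : z = ζ ^ k := by rw [← sub_eq_zero]; rw [sub_eq_zero] at h ⊢; exact h.symm
      rw [h4, ← pow_mul, mul_comm k N, pow_mul, hζN1, one_pow]
    · intro h
      apply hzN2
      have h4 : z = -ζ ^ k := eq_neg_of_add_eq_zero_right h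
      rw [h4, hNo.neg_pow, ← pow_mul, mul_comm k N, pow_mul, hζN1, one_pow]
  set c : ℂ := (((α : ℂ) - β) - ((α : ℂ) + β + 1)) / 2 with hcdef
  set d : ℂ := (((α : ℂ) - β) + ((α : ℂ) + β + 1)) / 2 with hddef
  have hterm : ∀ k ∈ Finset.range N, Acoef α β N k z
      = z * (c * (ζ ^ k + z)⁻¹ + d * (ζ ^ k - z)⁻¹) := by
    intro k hk
    have hNeven : ¬ Even N := Nat.not_even_iff_odd.mpr hNo
    rw [Acoef, if_neg hNeven]
    have hper : ∀ a b : ℤ, (N : ℤ) ∣ b - a → qN N ^ a = qN N ^ b := by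
      rintro a b ⟨t, ht⟩
      have hb : b = a + (N : ℤ) * t := by omega
      rw [hb, zpow_add₀ hq0, zpow_mul, zpow_natCast, hqN1, one_zpow, mul_one]
    have hζk : ζ ^ k = qN N ^ (((s + 1) * k : ℕ) : ℤ) := by
      rw [zpow_natCast, pow_mul, hζdef]
    have hrho : (if Even k then qN N ^ ((k : ℤ) / 2) else qN N ^ (((k : ℤ) - (N : ℤ)) / 2))
        = ζ ^ k := by
      rcases Nat.even_or_odd k with hke | hko
      · obtain ⟨m, hm⟩ := id hke
        rw [if_pos hke, hζk]
        have hdiv : (k : ℤ) / 2 = m := by omega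
        rw [hdiv]
        apply hper
        exact ⟨m, by push_cast [hs, hm]; ring⟩
      · obtain ⟨m, hm⟩ := id hko
        rw [if_neg (Nat.not_even_iff_odd.mpr hko), hζk]
        have hdiv : ((k : ℤ) - (N : ℤ)) / 2 = (m : ℤ) - s := by omega
        rw [hdiv]
        apply hper
        exact ⟨m + 1, by push_cast [hs, hm]; ring⟩
    rw [hrho, ← hζ2]
    have hpow : (ζ ^ 2) ^ k = (ζ ^ k) ^ 2 := by rw [← pow_mul, mul_comm, pow_mul]
    rw [hpow]
    have h5 := (hden k).1
    have h6 := (hden k).2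
    have h7 : (ζ ^ k) ^ 2 - z ^ 2 ≠ 0 := by
      rw [sq_sub_sq]
      exact mul_ne_zero h6 h5
    field_simp
    ring
  rw [Finset.sum_congr rfl hterm, ← Finset.mul_sum, Finset.sum_add_distrib,
    ← Finset.mul_sum, ← Finset.mul_sum]
  have hSm : ∑ k ∈ Finset.range N, (ζ ^ k - z)⁻¹ = (N : ℂ) * z ^ (N - 1) / (1 - z ^ N) :=
    sum_inv_root N hN ζ z hζprim hzN1
  have hSp : ∑ k ∈ Finset.range N, (ζ ^ k + z)⁻¹ = (N : ℂ) * z ^ (N - 1) / (1 + z ^ N) := by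
    have h' : (-z) ^ N ≠ 1 := by
      rw [hNo.neg_pow]
      intro h
      exact hzN2 (neg_eq_iff_eq_neg.mp h)
    have h8 := sum_inv_root N hN ζ (-z) hζprim h'
    simp only [sub_neg_eq_add] at h8
    rw [h8, hNo.neg_pow, Even.neg_pow ⟨s, by omega⟩, sub_neg_eq_add]
  rw [hSm, hSp]
  have hz2N : z ^ (2 * N) - 1 ≠ 0 := sub_ne_zero.mpr hz2
  obtain ⟨M, rfl⟩ : ∃ M, N = M + 1 := ⟨N - 1, by omega⟩
  simp only [Nat.add_sub_cancel] at *
  field_simp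
  ring
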